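/- Let $\mu, \zeta, \hat{y} \in \mathbb{R}^k$, let $P$ be an affine subspace (plane) of $\mathbb{R}^k$ containing $\zeta$ and $\hat{y}$, and let $\hat{\mu}$ be the orthogonal projection of $\mu$ onto $P$. If $\|\zeta - \mu\| \leq \frac{\epsilon}{1+\epsilon}\|\hat{y}-\mu\|$ for some $\epsilon \in (0,1]$, then $\|\zeta - \hat{\mu}\| \leq \epsilon\,\|\hat{y}-\hat{\mu}\|$. -/

import Mathlib

open RealInnerProductSpace

/-- Mismatch bound, Lemma 2: if `‖ζ - μ‖ ≤ (ε/(1+ε)) ‖ŷ - μ‖` and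
`μ̂` is the orthogonal projection of `μ` onto an affine subspace `P` containing
`ζ` and `ŷ`, then `‖ζ - μ̂‖ ≤ ε ‖ŷ - μ̂‖`. -/
theorem stmt7 {k : ℕ} (mu zeta yhat : EuclideanSpace ℝ (Fin k))
    (P : AffineSubspace ℝ (EuclideanSpace ℝ (Fin k)))
    [Nonempty P] [Submodule.HasOrthogonalProjection P.direction]
    (hzeta : zeta ∈ P) (hyhat : yhat ∈ P)
    (muhat : EuclideanSpace ℝ (Fin k))
    (hproj : muhat = (EuclideanGeometry.orthogonalProjection P mu : EuclideanSpace ℝ (Fin k)))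
    (ε : ℝ) (hε : ε ∈ Set.Ioc (0 : ℝ) 1)
    (hmm : ‖zeta - mu‖ ≤ (ε / (1 + ε)) * ‖yhat - mu‖) :
    ‖zeta - muhat‖ ≤ ε * ‖yhat - muhat‖ := by
  obtain ⟨hε0, hε1⟩ := hε
  have h1 : dist zeta mu * dist zeta mu =
      dist zeta muhat * dist zeta muhat + dist mu muhat * dist mu muhat := by
    rw [hproj]
    exact EuclideanGeometry.dist_sq_eq_dist_orthogonalProjection_sq_add_dist_orthogonalProjection_sq
      mu hzeta
  have hA : dist zeta muhat ≤ dist zeta mu := by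
    nlinarith [dist_nonneg (x := mu) (y := muhat), dist_nonneg (x := zeta) (y := mu),
      dist_nonneg (x := zeta) (y := muhat)]
  have hB : dist mu muhat ≤ dist zeta mu := by
    nlinarith [dist_nonneg (x := mu) (y := muhat), dist_nonneg (x := zeta) (y := mu),
      dist_nonneg (x := zeta) (y := muhat)]
  have htri : dist yhat mu ≤ dist yhat muhat + dist muhat mu := dist_triangle _ _ _
  have hd1 : ‖zeta - mu‖ = dist zeta mu := (dist_eq_norm _ _).symm
  have hd2 : ‖yhat - mu‖ = dist yhat mu := (dist_eq_norm _ _).symm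
  have hd3 : ‖zeta - muhat‖ = dist zeta muhat := (dist_eq_norm _ _).symm
  have hd4 : ‖yhat - muhat‖ = dist yhat muhat := (dist_eq_norm _ _).symm
  rw [hd1, hd2] at hmm
  rw [hd3, hd4]
  rw [dist_comm muhat mu] at htri
  rw [div_mul_eq_mul_div, le_div_iff₀ (by linarith : (0:ℝ) < 1 + ε)] at hmm
  nlinarith [dist_nonneg (x := yhat) (y := muhat)]
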